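/- With the quantities $P^2 = \left(\frac{\sqrt{3}-\sqrt{2}}{\sqrt{18}}\right)^2 \cdot \frac{3+2\sqrt{2}}{40}$, $\lambda = 1 - \frac{\sqrt{2}}{2}$, the quantity $g = -P^2 \lambda - \sqrt{2}\left(1 - \sqrt{\tfrac{2}{3}}\right)\cdot \frac{3}{40} + \frac{2}{3}\cdot\frac{\sqrt{2}}{40}$ satisfies $g > 0$. -/

import Mathlib

open Real

/-- The numerical core of Eldan's criterion `g(0,3,R₈) > 0` for the 8-cycle with
candidate edge {0,3}. -/
theorem eldan_criterion_positive :
    let P2 : ℝ := ((Real.sqrt 3 - Real.sqrt 2) / Real.sqrt 18) ^ 2 * ((3 + 2 * Real.sqrt 2) / 40)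
    let lam : ℝ := 1 - Real.sqrt 2 / 2
    let g : ℝ := -P2 * lam - Real.sqrt 2 * (1 - Real.sqrt (2 / 3)) * (3 / 40)
        + (2 / 3) * (Real.sqrt 2 / 40)
    g > 0 := by
  intro P2 lam g
  have h18 : Real.sqrt 18 = 3 * Real.sqrt 2 := by
    rw [show (18:ℝ) = 3^2 * 2 by norm_num, Real.sqrt_mul (by positivity),
      Real.sqrt_sq (by norm_num)]
  have h23 : Real.sqrt (2/3) = Real.sqrt 2 / Real.sqrt 3 := by
    rw [Real.sqrt_div' 2 (by norm_num)]
  have h2 : Real.sqrt 2 ^ 2 = 2 := Real.sq_sqrt (by norm_num)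
  have h3 : Real.sqrt 3 ^ 2 = 3 := Real.sq_sqrt (by norm_num)
  have lb2 : (1.414:ℝ) < Real.sqrt 2 := by
    nlinarith [Real.sqrt_nonneg 2, h2]
  have ub2 : Real.sqrt 2 < 1.4143 := by
    nlinarith [Real.sqrt_nonneg 2, h2]
  have lb3 : (1.732:ℝ) < Real.sqrt 3 := by
    nlinarith [Real.sqrt_nonneg 3, h3]
  have ub3 : Real.sqrt 3 < 1.7321 := by
    nlinarith [Real.sqrt_nonneg 3, h3]
  have h3pos : (0:ℝ) < Real.sqrt 3 := by linarith
  show g > 0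
  simp only [g, P2, lam, h18, h23]
  rw [div_pow, gt_iff_lt]
  have e1 : ((3:ℝ) * Real.sqrt 2)^2 = 18 := by nlinarith
  rw [e1]
  field_simp
  have key : (√3 - √2) * 3 * (-(√3 * (√3 - √2) * (3 + √2 * 2) * (2 - √2)) - √2 * 18 * 3 * 2) + √3 * √2 * 18 * 2 ^ 2
      = 684 + 36 * √2 - 30 * √3 - 267 * (√3 * √2) := by
    linear_combination (6*√3*√2^2 - 12*√3^2*√2 - 3*√3*√2 + 6*√3^3 + 6*√3^2 - 6*√3 + 324) * h2
      + (-3*√3*√2 - 6*√3 + 12*√2 + 12) * h3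
  have h6 : (√3 * √2) ^ 2 = 6 := by rw [mul_pow, h2, h3]; norm_num
  have hab : √3 * √2 < 2.4495 := by nlinarith [mul_pos h3pos (show (0:ℝ) < √2 by linarith)]
  nlinarith [key, hab, lb2, ub3]
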